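/- In the planar Kepler problem with ℓ ≠ 0 and energy E > 0, for every point r on the orbit, |I - r| - |r| = k/E, where I = A/E and A is the LRL vector. Hence the orbit lies on one branch of a hyperbola with foci 0 and I and major axis k/E. -/

import Mathlib

/-- Kepler first law for hyperbolic orbits: if `E > 0` and `ℓ ≠ 0`, every point `r`
of the orbit satisfies `‖I - r‖ - ‖r‖ = k/E` where `I = A/E`; thus the orbit lies
on one branch of a hyperbola with foci `0` and `I` and major axis `k/E`. -/
theorem hyperbolic_orbit (k : ℝ) (r p : EuclideanSpace ℝ (Fin 2)) (hr : r ≠ 0)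
    (ℓ : ℝ) (hℓdef : ℓ = r 0 * p 1 - r 1 * p 0) (hℓ : ℓ ≠ 0)
    (E : ℝ) (hE : E = ‖p‖ ^ 2 / 2 - k / ‖r‖) (hEpos : 0 < E)
    (A : EuclideanSpace ℝ (Fin 2))
    (hA : A = ‖p‖ ^ 2 • r - (inner ℝ r p : ℝ) • p - (k / ‖r‖) • r)
    (I : EuclideanSpace ℝ (Fin 2)) (hI : I = E⁻¹ • A) :
    ‖I - r‖ - ‖r‖ = k / E := by
  have hEne : E ≠ 0 := ne_of_gt hEpos
  set c : ℝ := ‖p‖ ^ 2 / 2 with hc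
  set b : ℝ := (inner ℝ r p : ℝ) with hb
  have hp2 : ‖p‖ ^ 2 = 2 * c := by rw [hc]; ring
  have hv : I - r = E⁻¹ • (c • r - b • p) := by
    have h : E • (I - r) = c • r - b • p := by
      rw [hI, smul_sub, smul_smul, mul_inv_cancel₀ hEne, one_smul, hA, hE, hp2]
      module
    rw [← h, smul_smul, inv_mul_cancel₀ hEne, one_smul]
  have hcnn : 0 ≤ c := by rw [hc]; positivity
  have hn : ‖c • r - b • p‖ = c * ‖r‖ := by
    have hsq : ‖c • r - b • p‖ ^ 2 = (c * ‖r‖) ^ 2 := by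
      rw [← real_inner_self_eq_norm_sq]
      simp only [inner_sub_left, inner_sub_right, real_inner_smul_left,
        real_inner_smul_right]
      have hbc : (inner ℝ p r : ℝ) = b := by rw [hb, real_inner_comm]
      rw [real_inner_self_eq_norm_sq, real_inner_self_eq_norm_sq, hbc, hp2]
      ring
    nlinarith [norm_nonneg (c • r - b • p), mul_nonneg hcnn (norm_nonneg r)]
  have hrpos : (0:ℝ) < ‖r‖ := norm_pos_iff.mpr hr
  rw [hv, norm_smul, hn, Real.norm_eq_abs, abs_of_pos (inv_pos.mpr hEpos)]
  have hk : k = (c - E) * ‖r‖ := by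
    have : k / ‖r‖ = c - E := by rw [hE]; ring
    field_simp at this; linarith [this]
  rw [hk]
  field_simp
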